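/- Let r > 0, p ≥ 1, m ∈ ℕ, let E = ℝ^m with the Euclidean inner product, K and E₁ finite-dimensional real inner product spaces, T : E → K and A : E → E₁ linear maps, g ∈ K, f ∈ E₁, γ > 0, and F = {v ∈ E : Av = f}. Let (ε_n) be a sequence in (0, r) with ε_n → 0 and, for each n, let v_n be a minimizer over F of J_p^{ε_n}(v) = ‖Tv − g‖² + γ ∑_{i=1}^m W_r^{p,ε_n}(v_i). If v_n converges to some v* ∈ E, then v* is a minimizer over F of J_p(v) = ‖Tv − g‖² + γ ∑_{i=1}^m min{|v_i|^p, r^p}. -/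

import Mathlib

/-- The smoothed truncated power potential `W_r^{p,ε}`. -/
noncomputable def Wpot (r p ε t : ℝ) : ℝ :=
  if |t| ≤ r - ε then |t| ^ p
  else if |t| ≤ r + ε then
    (p * (r - ε) ^ (p - 1) / (12 * ε ^ 2) +
        (p * (r - ε) ^ (p - 1) / (2 * ε) +
          3 * ((r - ε) ^ p - r ^ p) / (4 * ε ^ 2)) / (3 * ε)) *
      (|t| - (r + ε)) ^ 3 +
    (p * (r - ε) ^ (p - 1) / (2 * ε) + 3 * ((r - ε) ^ p - r ^ p) / (4 * ε ^ 2)) *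
      (|t| - (r + ε)) ^ 2 + r ^ p
  else r ^ p


private lemma wpot_aux (M ε Bp D s e : ℝ) (hε : 0 < ε) (hBp0 : 0 ≤ Bp) (hBpM : Bp ≤ M)
    (hD0 : 0 ≤ D) (hD : D ≤ M * ε) (hs1 : -(2*ε) ≤ s) (hs2 : s ≤ 0)
    (he0 : 0 ≤ e) (he : e ≤ D) :
    |(Bp / (12 * ε ^ 2) + (Bp / (2 * ε) + 3 * (-D) / (4 * ε ^ 2)) / (3 * ε)) * s ^ 3 +
      (Bp / (2 * ε) + 3 * (-D) / (4 * ε ^ 2)) * s ^ 2 + e| ≤ 10 * M * ε := by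
  have hε' : ε ≠ 0 := hε.ne'
  have hM : 0 ≤ M := le_trans hBp0 hBpM
  have hX : (Bp / (12 * ε ^ 2) + (Bp / (2 * ε) + 3 * (-D) / (4 * ε ^ 2)) / (3 * ε)) * s ^ 3 +
      (Bp / (2 * ε) + 3 * (-D) / (4 * ε ^ 2)) * s ^ 2 + e
      = ((ε * Bp - D) * s ^ 3 + (2 * ε * Bp - 3 * D) * s ^ 2 * ε + 4 * ε ^ 3 * e) / (4 * ε ^ 3) := by
    field_simp
    ring
  rw [hX, abs_div, abs_of_pos (by positivity : (0:ℝ) < 4 * ε ^ 3), div_le_iff₀ (by positivity)]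
  have hs3lo : -(8 * ε ^ 3) ≤ s ^ 3 := by nlinarith [sq_nonneg (s + 2*ε), sq_nonneg s]
  have hs3hi : s ^ 3 ≤ 0 := by nlinarith [sq_nonneg s]
  have hsq : s ^ 2 ≤ 4 * ε ^ 2 := by nlinarith
  have hsq0 : 0 ≤ s ^ 2 := sq_nonneg s
  rw [abs_le]
  constructor
  · nlinarith [mul_nonneg hD0 (neg_nonneg.mpr hs3hi),
      mul_nonneg hε.le (mul_nonneg (sub_nonneg.mpr hBpM) (neg_nonneg.mpr hs3hi)),
      mul_nonneg (mul_nonneg hM hε.le) (by linarith : 0 ≤ s ^ 3 + 8 * ε ^ 3),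
      mul_le_mul_of_nonneg_right
        (mul_le_mul hD hsq hsq0 (mul_nonneg hM hε.le)) hε.le,
      mul_nonneg (mul_nonneg (mul_nonneg hε.le hBp0) hsq0) hε.le,
      mul_nonneg (pow_nonneg hε.le 3) he0, hε.le]
  · nlinarith [mul_nonneg (mul_nonneg hε.le hBp0) (neg_nonneg.mpr hs3hi),
      mul_nonneg hD0 (by linarith : 0 ≤ s ^ 3 + 8 * ε ^ 3),
      mul_nonneg (mul_nonneg hM hε.le) (by linarith : 0 ≤ s ^ 3 + 8 * ε ^ 3),
      mul_le_mul_of_nonneg_right (mul_le_mul_of_nonneg_left hBpM hε.le) hsq0,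
      mul_nonneg (mul_nonneg hM hε.le) (by linarith : 0 ≤ 4 * ε ^ 2 - s ^ 2),
      mul_nonneg (mul_nonneg hD0 hsq0) hε.le,
      mul_le_mul_of_nonneg_left (le_trans he hD) (by positivity : (0:ℝ) ≤ 4 * ε ^ 3),
      mul_nonneg (pow_nonneg hε.le 3) he0, hε.le]


private lemma wpot_close (r p : ℝ) (hr : 0 < r) (hp : 1 ≤ p) (ε t : ℝ)
    (hε : 0 < ε) (hεr : ε < r) :
    |Wpot r p ε t - min (|t| ^ p) (r ^ p)| ≤ 10 * (p * r ^ (p - 1)) * ε := by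
  have hp0 : (0:ℝ) ≤ p := by linarith
  have hp1 : (0:ℝ) ≤ p - 1 := by linarith
  have hrε : (0:ℝ) ≤ r - ε := by linarith
  have hM : 0 ≤ p * r ^ (p - 1) := mul_nonneg hp0 (Real.rpow_nonneg hr.le _)
  have hBp0 : 0 ≤ p * (r - ε) ^ (p - 1) := mul_nonneg hp0 (Real.rpow_nonneg hrε _)
  have hBpM : p * (r - ε) ^ (p - 1) ≤ p * r ^ (p - 1) :=
    mul_le_mul_of_nonneg_left (Real.rpow_le_rpow hrε (by linarith) hp1) hp0
  have hD0 : 0 ≤ r ^ p - (r - ε) ^ p :=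
    sub_nonneg.mpr (Real.rpow_le_rpow hrε (by linarith) hp0)
  have hrp : r ^ p = r ^ (p - 1) * r := by
    rw [← Real.rpow_add_one hr.ne' (p - 1)]; ring_nf
  have hD : r ^ p - (r - ε) ^ p ≤ (p * r ^ (p - 1)) * ε := by
    have hb : (-1 : ℝ) ≤ -(ε / r) := by
      rw [neg_le, neg_neg]; exact (div_le_one hr).mpr hεr.le
    have hber := one_add_mul_self_le_rpow_one_add hb hp
    have h1s : (1 : ℝ) + -(ε / r) = (r - ε) / r := by field_simp; ring
    rw [h1s, Real.div_rpow hrε hr.le] at hber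
    have hrpow : (0:ℝ) < r ^ p := Real.rpow_pos_of_pos hr p
    have := mul_le_mul_of_nonneg_right hber hrpow.le
    rw [div_mul_cancel₀ _ hrpow.ne'] at this
    have hfin : (1 + p * -(ε / r)) * r ^ p = r ^ p - p * r ^ (p - 1) * ε := by
      rw [hrp]; field_simp; ring
    linarith [hfin ▸ this]
  unfold Wpot
  by_cases h1 : |t| ≤ r - ε
  · rw [if_pos h1]
    have htp : |t| ^ p ≤ r ^ p := Real.rpow_le_rpow (abs_nonneg t) (by linarith) hp0
    rw [min_eq_left htp, sub_self, abs_zero]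
    positivity
  · rw [if_neg h1]
    by_cases h2 : |t| ≤ r + ε
    · rw [if_pos h2]
      have hgt : r - ε < |t| := lt_of_not_ge h1
      -- min is between (r-ε)^p and r^p
      have hmin_le : min (|t| ^ p) (r ^ p) ≤ r ^ p := min_le_right _ _
      have hmin_ge : (r - ε) ^ p ≤ min (|t| ^ p) (r ^ p) :=
        le_min (Real.rpow_le_rpow hrε hgt.le hp0)
          (Real.rpow_le_rpow hrε (by linarith) hp0)
      have heq : ((p * (r - ε) ^ (p - 1) / (12 * ε ^ 2) +
            (p * (r - ε) ^ (p - 1) / (2 * ε) +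
              3 * ((r - ε) ^ p - r ^ p) / (4 * ε ^ 2)) / (3 * ε)) *
          (|t| - (r + ε)) ^ 3 +
        (p * (r - ε) ^ (p - 1) / (2 * ε) + 3 * ((r - ε) ^ p - r ^ p) / (4 * ε ^ 2)) *
          (|t| - (r + ε)) ^ 2 + r ^ p) - min (|t| ^ p) (r ^ p)
        = (p * (r - ε) ^ (p - 1) / (12 * ε ^ 2) +
            (p * (r - ε) ^ (p - 1) / (2 * ε) +
              3 * (-(r ^ p - (r - ε) ^ p)) / (4 * ε ^ 2)) / (3 * ε)) *
          (|t| - (r + ε)) ^ 3 +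
          (p * (r - ε) ^ (p - 1) / (2 * ε) +
            3 * (-(r ^ p - (r - ε) ^ p)) / (4 * ε ^ 2)) *
          (|t| - (r + ε)) ^ 2 + (r ^ p - min (|t| ^ p) (r ^ p)) := by ring
      rw [heq]
      exact wpot_aux (p * r ^ (p - 1)) ε (p * (r - ε) ^ (p - 1)) (r ^ p - (r - ε) ^ p)
          (|t| - (r + ε)) (r ^ p - min (|t| ^ p) (r ^ p)) hε hBp0 hBpM hD0 hD
          (by linarith) (by linarith) (by linarith) (by linarith)
    · rw [if_neg h2]
      have hgt : r + ε < |t| := lt_of_not_ge h2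
      have htp : r ^ p ≤ |t| ^ p := Real.rpow_le_rpow hr.le (by linarith) hp0
      rw [min_eq_right htp, sub_self, abs_zero]
      positivity

/-- If `ε_n → 0`, `v_n` minimizes `J_p^{ε_n}` over `F = {Av = f}`, and
`v_n → v*`, then `v*` minimizes `J_p(v) = ‖Tv − g‖² + γ ∑ᵢ min{|vᵢ|^p, r^p}` over `F`. -/
theorem statement9 (r p : ℝ) (hr : 0 < r) (hp : 1 ≤ p) (m : ℕ)
    {K E₁ : Type*}
    [NormedAddCommGroup K] [InnerProductSpace ℝ K] [FiniteDimensional ℝ K]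
    [NormedAddCommGroup E₁] [InnerProductSpace ℝ E₁] [FiniteDimensional ℝ E₁]
    (T : EuclideanSpace ℝ (Fin m) →ₗ[ℝ] K) (A : EuclideanSpace ℝ (Fin m) →ₗ[ℝ] E₁)
    (g : K) (f : E₁) (γ : ℝ) (hγ : 0 < γ)
    (εseq : ℕ → ℝ) (hεpos : ∀ n, 0 < εseq n) (hεlt : ∀ n, εseq n < r)
    (hεto0 : Filter.Tendsto εseq Filter.atTop (nhds 0))
    (vn : ℕ → EuclideanSpace ℝ (Fin m))
    (hvnf : ∀ n, A (vn n) = f)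
    (hvnmin : ∀ n, ∀ v : EuclideanSpace ℝ (Fin m), A v = f →
      ‖T (vn n) - g‖ ^ 2 + γ * ∑ i, Wpot r p (εseq n) (vn n i) ≤
        ‖T v - g‖ ^ 2 + γ * ∑ i, Wpot r p (εseq n) (v i))
    (vstar : EuclideanSpace ℝ (Fin m))
    (hconv : Filter.Tendsto vn Filter.atTop (nhds vstar)) :
    A vstar = f ∧
      ∀ v : EuclideanSpace ℝ (Fin m), A v = f →
        ‖T vstar - g‖ ^ 2 + γ * ∑ i, min (|vstar i| ^ p) (r ^ p) ≤
          ‖T v - g‖ ^ 2 + γ * ∑ i, min (|v i| ^ p) (r ^ p) := by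
  have hp0 : (0:ℝ) ≤ p := by linarith
  set C : ℝ := 10 * (p * r ^ (p - 1)) with hCdef
  have hC : 0 ≤ C := by positivity
  -- continuity of T and A
  have hTc : Continuous T := T.continuous_of_finiteDimensional
  have hAc : Continuous A := A.continuous_of_finiteDimensional
  constructor
  · -- A vstar = f
    have h1 : Filter.Tendsto (fun n => A (vn n)) Filter.atTop (nhds (A vstar)) :=
      (hAc.tendsto vstar).comp hconv
    have h2 : (fun n => A (vn n)) = fun _ => f := funext hvnf
    rw [h2] at h1
    exact tendsto_nhds_unique h1 tendsto_const_nhds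
  · intro v hv
    set J : EuclideanSpace ℝ (Fin m) → ℝ :=
      fun w => ‖T w - g‖ ^ 2 + γ * ∑ i, min (|w i| ^ p) (r ^ p) with hJdef
    show J vstar ≤ J v
    have hJcont : Continuous J := by
      apply Continuous.add
      · exact ((hTc.sub continuous_const).norm.pow 2)
      · apply continuous_const.mul
        apply continuous_finset_sum
        intro i _
        exact (((PiLp.continuous_apply 2 _ i).abs.rpow_const fun x => Or.inr hp0).min
          continuous_const)
    -- uniform closeness of sums
    have hsum : ∀ n (w : EuclideanSpace ℝ (Fin m)),
        |∑ i, Wpot r p (εseq n) (w i) - ∑ i, min (|w i| ^ p) (r ^ p)|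
          ≤ m * (C * εseq n) := by
      intro n w
      rw [← Finset.sum_sub_distrib]
      calc |∑ i, (Wpot r p (εseq n) (w i) - min (|w i| ^ p) (r ^ p))|
          ≤ ∑ i, |Wpot r p (εseq n) (w i) - min (|w i| ^ p) (r ^ p)| :=
            Finset.abs_sum_le_sum_abs _ _
        _ ≤ ∑ _i : Fin m, C * εseq n :=
            Finset.sum_le_sum fun i _ =>
              wpot_close r p hr hp (εseq n) (w i) (hεpos n) (hεlt n)
        _ = m * (C * εseq n) := by
            rw [Finset.sum_const, Finset.card_univ, Fintype.card_fin, nsmul_eq_mul]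
    -- key inequality
    have key : ∀ n, J (vn n) ≤ J v + 2 * γ * (m * C) * εseq n := by
      intro n
      have h1 := hvnmin n v hv
      have h2 := abs_le.mp (hsum n (vn n))
      have h3 := abs_le.mp (hsum n v)
      have h4 : γ * (∑ i, min (|vn n i| ^ p) (r ^ p) - ∑ i, Wpot r p (εseq n) (vn n i))
          ≤ γ * (m * (C * εseq n)) :=
        mul_le_mul_of_nonneg_left (by linarith [h2.1]) hγ.le
      have h5 : γ * (∑ i, Wpot r p (εseq n) (v i) - ∑ i, min (|v i| ^ p) (r ^ p))
          ≤ γ * (m * (C * εseq n)) :=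
        mul_le_mul_of_nonneg_left (by linarith [h3.2]) hγ.le
      simp only [hJdef]
      nlinarith [h1, h4, h5]
    -- pass to the limit
    have hJlim : Filter.Tendsto (fun n => J (vn n)) Filter.atTop (nhds (J vstar)) :=
      (hJcont.tendsto vstar).comp hconv
    have hRlim : Filter.Tendsto (fun n => J v + 2 * γ * (m * C) * εseq n)
        Filter.atTop (nhds (J v)) := by
      have h0 : Filter.Tendsto (fun n => 2 * γ * (m * C) * εseq n)
          Filter.atTop (nhds (2 * γ * (m * C) * 0)) := hεto0.const_mul _
      rw [mul_zero] at h0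
      have := tendsto_const_nhds.add h0 (x := Filter.atTop (α := ℕ)) (f := fun _ => J v)
      rwa [add_zero] at this
    exact le_of_tendsto_of_tendsto' hJlim hRlim key
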